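/- arXiv:1602.04922 — 5 statements merged into one kernel-verified Lean document; each statement's English description precedes it below -/
import Mathlib

section
/- Let B₁, B₂ ∈ ℝ² with dist(B₁, B₂) = r > 0. If P and Q both lie in the intersection of the closed balls of radius r centered at B₁ and at B₂, and P and Q lie on the same closed side of the line through B₁ and B₂, then dist(P, Q) ≤ r. -/
noncomputable section

namespace BNC

/-- The Euclidean plane. -/
abbrev Pt : Type := EuclideanSpace ℝ (Fin 2)

/-- Planar cross product (determinant) of two vectors. -/
def cross (u w : Pt) : ℝ := u 0 * w 1 - u 1 * w 0

/-- `v` lists points in strictly convex position in counterclockwise order: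
every point distinct from `v i` and `v (i+1)` lies strictly to the left of the
directed line from `v i` to `v (i+1)`.  (This also forces no three of the
points to be collinear.) -/
def ConvexCCW {n : ℕ} (v : ZMod n → Pt) : Prop :=
  ∀ i j : ZMod n, j ≠ i → j ≠ i + 1 → 0 < cross (v (i + 1) - v i) (v j - v i)

/-- The cyclic arc of indices `i, i+1, …, j` (mod `n`). -/
def arc {n : ℕ} (i j : ZMod n) : Finset (ZMod n) :=
  Finset.image (fun t : ℕ => i + (t : ZMod n)) (Finset.range ((j - i).val + 1))

/-- The turning angle `τ(i,j)`: the sum over `k ∈ ⟨i+1..j−1⟩` of the unsigned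
angle between `v (k+1) − v k` and `v k − v (k−1)`. -/
def tau {n : ℕ} (v : ZMod n → Pt) (i j : ZMod n) : ℝ :=
  ∑ k ∈ arc (i + 1) (j - 1),
    InnerProductGeometry.angle (v (k + 1) - v k) (v k - v (k - 1))

/-- The length of the segment joining the two points of an unordered pair. -/
def pairDist {n : ℕ} (v : ZMod n → Pt) : Sym2 (ZMod n) → ℝ :=
  Sym2.lift ⟨fun a b => dist (v a) (v b), fun a b => dist_comm (v a) (v b)⟩

/-- The closed segment joining the two points of an unordered pair. -/
def pairSeg {n : ℕ} (v : ZMod n → Pt) : Sym2 (ZMod n) → Set Pt :=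
  Sym2.lift ⟨fun a b => segment ℝ (v a) (v b), fun a b => segment_symm ℝ (v a) (v b)⟩

/-- `M` is a perfect matching of the index set `A`: a set of non-degenerate
unordered pairs of indices from `A` such that every index of `A` belongs to
exactly one pair. -/
def IsMatchingOn {n : ℕ} (A : Set (ZMod n)) (M : Set (Sym2 (ZMod n))) : Prop :=
  (∀ e ∈ M, ¬ e.IsDiag) ∧ (∀ e ∈ M, ∀ k, k ∈ e → k ∈ A) ∧
    (∀ k ∈ A, ∃! e, e ∈ M ∧ k ∈ e)

/-- The closed segments of distinct pairs of `M` are pairwise disjoint. -/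
def NonCrossing {n : ℕ} (v : ZMod n → Pt) (M : Set (Sym2 (ZMod n))) : Prop :=
  ∀ e ∈ M, ∀ e' ∈ M, e ≠ e' → Disjoint (pairSeg v e) (pairSeg v e')

/-- The bottleneck value of a matching: the maximal segment length. -/
def bnM {n : ℕ} (v : ZMod n → Pt) (M : Set (Sym2 (ZMod n))) : ℝ :=
  sSup (pairDist v '' M)

/-- A non-crossing perfect matching of the whole point set. -/
def IsNCMatching {n : ℕ} (v : ZMod n → Pt) (M : Set (Sym2 (ZMod n))) : Prop :=
  IsMatchingOn Set.univ M ∧ NonCrossing v M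

/-- A bottleneck matching: a non-crossing matching minimizing the bottleneck value. -/
def IsBottleneck {n : ℕ} (v : ZMod n → Pt) (M : Set (Sym2 (ZMod n))) : Prop :=
  IsNCMatching v M ∧ ∀ M', IsNCMatching v M' → bnM v M ≤ bnM v M'

/-- A pair is an edge of the full polygon iff it is of the form `{k, k+1}`. -/
def IsPolyEdge {n : ℕ} (e : Sym2 (ZMod n)) : Prop := ∃ k : ZMod n, e = s(k, k + 1)

/-- The diagonals of a matching of the full point set. -/
def fullDiags {n : ℕ} (M : Set (Sym2 (ZMod n))) : Set (Sym2 (ZMod n)) :=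
  {e ∈ M | ¬ IsPolyEdge e}

/-- The full polygon: the convex hull of all the points. -/
def fullPoly {n : ℕ} (v : ZMod n → Pt) : Set Pt := convexHull ℝ (Set.range v)

/-- The interior of the polygon `Poly` minus the union of the segments of the
diagonals from `D`. -/
def regionSpace {n : ℕ} (v : ZMod n → Pt) (Poly : Set Pt) (D : Set (Sym2 (ZMod n))) :
    Set Pt :=
  interior Poly \ ⋃ e ∈ D, pairSeg v e

/-- `R` is a region: the closure of a connected component of the interior of the
polygon minus the union of the diagonal segments. -/
def IsRegion {n : ℕ} (v : ZMod n → Pt) (Poly : Set Pt) (D : Set (Sym2 (ZMod n)))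
    (R : Set Pt) : Prop :=
  ∃ x ∈ regionSpace v Poly D, R = closure (connectedComponentIn (regionSpace v Poly D) x)

/-- The diagonals from `D` whose segment lies on the boundary of `R`. -/
def boundDiags {n : ℕ} (v : ZMod n → Pt) (Poly : Set Pt) (D : Set (Sym2 (ZMod n)))
    (R : Set Pt) : Set (Sym2 (ZMod n)) :=
  {e ∈ D | pairSeg v e ⊆ frontier R}

/-- `R` is a region bounded by exactly `k` diagonals. -/
def KBounded {n : ℕ} (v : ZMod n → Pt) (Poly : Set Pt) (D : Set (Sym2 (ZMod n)))
    (R : Set Pt) (k : ℕ) : Prop :=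
  IsRegion v Poly D R ∧ (boundDiags v Poly D R).ncard = k

/-- The graph whose vertices are the diagonals of `D`, two being adjacent iff
some 2-bounded region has both on its boundary. -/
def cascadeGraph {n : ℕ} (v : ZMod n → Pt) (Poly : Set Pt) (D : Set (Sym2 (ZMod n))) :
    SimpleGraph D where
  Adj a b := a ≠ b ∧ ∃ R : Set Pt, KBounded v Poly D R 2 ∧
      pairSeg v a.1 ⊆ frontier R ∧ pairSeg v b.1 ⊆ frontier R
  symm := by
    constructor
    rintro a b ⟨hab, R, h1, h2, h3⟩
    exact ⟨hab.symm, R, h1, h3, h2⟩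
  loopless := by constructor; rintro a ⟨h, -⟩; exact h rfl

/-- The number of cascades: the number of connected components of the cascade graph. -/
def cascadeCount {n : ℕ} (v : ZMod n → Pt) (Poly : Set Pt) (D : Set (Sym2 (ZMod n))) : ℕ :=
  Nat.card (cascadeGraph v Poly D).ConnectedComponent

/-- A pair is a diagonal relative to the arc `⟨i..j⟩` iff it is neither `{i,j}`
nor of the form `{k, k+1}` with both `k` and `k+1` in the arc. -/
def ArcDiag {n : ℕ} (i j : ZMod n) (e : Sym2 (ZMod n)) : Prop :=
  e ≠ s(i, j) ∧ ∀ k : ZMod n, k ∈ arc i j → k + 1 ∈ arc i j → e ≠ s(k, k + 1)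

/-- The convex hull of the points of the arc `⟨i..j⟩`. -/
def arcPoly {n : ℕ} (v : ZMod n → Pt) (i j : ZMod n) : Set Pt :=
  convexHull ℝ (v '' (arc i j : Set (ZMod n)))

/-- The diagonals (relative to the arc `⟨i..j⟩`) of a matching `M`. -/
def arcDiags {n : ℕ} (i j : ZMod n) (M : Set (Sym2 (ZMod n))) : Set (Sym2 (ZMod n)) :=
  {e ∈ M | ArcDiag i j e}

/-- `M` is admissible for the subproblem `Matching(i,j)`: it is a non-crossing
perfect matching of the points of the arc `⟨i..j⟩`, it has at most one cascade,
and any region whose boundary contains the segment `[v i, v j]` has at most one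
diagonal of `M` on its boundary. -/
def Admissible {n : ℕ} (v : ZMod n → Pt) (i j : ZMod n) (M : Set (Sym2 (ZMod n))) : Prop :=
  IsMatchingOn (↑(arc i j)) M ∧ NonCrossing v M ∧
    cascadeCount v (arcPoly v i j) (arcDiags i j M) ≤ 1 ∧
    ∀ R : Set Pt, IsRegion v (arcPoly v i j) (arcDiags i j M) R →
      segment ℝ (v i) (v j) ⊆ frontier R →
      (boundDiags v (arcPoly v i j) (arcDiags i j M) R).ncard ≤ 1

/-- `S i j`: the optimal value of the subproblem `Matching(i,j)`. -/
def S {n : ℕ} (v : ZMod n → Pt) (i j : ZMod n) : ℝ :=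
  sInf (bnM v '' {M | Admissible v i j M})

/-- The pair `(i,j)` is necessary: every admissible matching attaining `S i j`
contains the pair `{i,j}`. -/
def Necessary {n : ℕ} (v : ZMod n → Pt) (i j : ZMod n) : Prop :=
  ∀ M : Set (Sym2 (ZMod n)), Admissible v i j M → bnM v M = S v i j → s(i, j) ∈ M

/-- The closed right side of the directed line from `v i` to `v j`. -/
def rightClosed {n : ℕ} (v : ZMod n → Pt) (i j : ZMod n) : Set Pt :=
  {P : Pt | cross (v j - v i) (P - v i) ≤ 0}

/-- The region `Π⁺(i,j)`. -/
def PiPlus {n : ℕ} (v : ZMod n → Pt) (i j : ZMod n) : Set Pt :=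
  {P ∈ rightClosed v i j |
    Real.pi / 3 ≤ EuclideanGeometry.angle (v i) P (v j) ∧ dist (v i) (v j) ≤ dist P (v i)}

/-- The region `Π⁻(i,j)`. -/
def PiMinus {n : ℕ} (v : ZMod n → Pt) (i j : ZMod n) : Set Pt :=
  {P ∈ rightClosed v i j |
    Real.pi / 3 ≤ EuclideanGeometry.angle (v i) P (v j) ∧ dist (v i) (v j) ≤ dist P (v j)}

/-- `(i,j)` is a feasible pair: the arc `⟨i..j⟩` has an even number of points. -/
def Feasible {n : ℕ} (i j : ZMod n) : Prop := Even (arc i j).card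

/-- `(i,j)` is a diagonal pair (not an edge, not degenerate). -/
def IsDiagPair {n : ℕ} (i j : ZMod n) : Prop := i ≠ j ∧ j ≠ i + 1 ∧ i ≠ j + 1

/-- `(i,j)` is a candidate diagonal: a feasible diagonal that is necessary and
whose turning angle is at most `2π/3`. -/
def Candidate {n : ℕ} (v : ZMod n → Pt) (i j : ZMod n) : Prop :=
  Feasible i j ∧ IsDiagPair i j ∧ Necessary v i j ∧ tau v i j ≤ 2 * Real.pi / 3

end BNC

lemma key13 (r x1 y1 x2 y2 : ℝ) (hr : 0 < r)
    (h1 : x1^2+y1^2 ≤ r^2) (h2 : (x1-r)^2+y1^2 ≤ r^2)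
    (h3 : x2^2+y2^2 ≤ r^2) (h4 : (x2-r)^2+y2^2 ≤ r^2)
    (hy1 : 0 ≤ y1) (hy2 : 0 ≤ y2) :
    (x1-x2)^2+(y1-y2)^2 ≤ r^2 := by
  have hx1 : 0 ≤ x1 := by nlinarith
  have hx2 : 0 ≤ x2 := by nlinarith
  have hx1' : x1 ≤ r := by nlinarith
  have hx2' : x2 ≤ r := by nlinarith
  rcases le_total x1 x2 with hx | hx <;> rcases le_total y1 y2 with hy | hy
  · nlinarith [mul_nonneg hx1 (sub_nonneg.2 hx), mul_nonneg hy1 (sub_nonneg.2 hy), sq_nonneg x1, sq_nonneg y1]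
  · nlinarith [mul_nonneg (sub_nonneg.2 hx2') (sub_nonneg.2 hx), mul_nonneg hy2 (sub_nonneg.2 hy), sq_nonneg (x2-r), sq_nonneg y2]
  · nlinarith [mul_nonneg (sub_nonneg.2 hx1') (sub_nonneg.2 hx), mul_nonneg hy1 (sub_nonneg.2 hy), sq_nonneg (x1-r), sq_nonneg y1]
  · nlinarith [mul_nonneg hx2 (sub_nonneg.2 hx), mul_nonneg hy2 (sub_nonneg.2 hy), sq_nonneg x2, sq_nonneg y2]

lemma lens13 (r u v p0 p1 q0 q1 : ℝ) (hr : 0 < r) (huv : u^2 + v^2 = r^2)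
    (hp1 : p0^2 + p1^2 ≤ r^2) (hp2 : (p0-u)^2 + (p1-v)^2 ≤ r^2)
    (hq1 : q0^2 + q1^2 ≤ r^2) (hq2 : (q0-u)^2 + (q1-v)^2 ≤ r^2)
    (hside : (0 ≤ u*p1 - v*p0 ∧ 0 ≤ u*q1 - v*q0) ∨ (u*p1 - v*p0 ≤ 0 ∧ u*q1 - v*q0 ≤ 0)) :
    (p0-q0)^2 + (p1-q1)^2 ≤ r^2 := by
  have hrne : r ≠ 0 := hr.ne'
  set X1 := (u*p0 + v*p1)/r with hX1
  set Y1 := (u*p1 - v*p0)/r with hY1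
  set X2 := (u*q0 + v*q1)/r with hX2
  set Y2 := (u*q1 - v*q0)/r with hY2
  have e1 : X1^2 + Y1^2 = p0^2 + p1^2 := by
    rw [hX1, hY1]; field_simp; linear_combination (p0^2 + p1^2) * huv
  have e2 : (X1-r)^2 + Y1^2 = (p0-u)^2 + (p1-v)^2 := by
    rw [hX1, hY1]; field_simp
    linear_combination ((p0-u)^2 + (p1-v)^2 + 2*u*p0 + 2*v*p1 - u^2 - v^2 - r^2) * huv
  have e3 : X2^2 + Y2^2 = q0^2 + q1^2 := by
    rw [hX2, hY2]; field_simp; linear_combination (q0^2 + q1^2) * huv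
  have e4 : (X2-r)^2 + Y2^2 = (q0-u)^2 + (q1-v)^2 := by
    rw [hX2, hY2]; field_simp
    linear_combination ((q0-u)^2 + (q1-v)^2 + 2*u*q0 + 2*v*q1 - u^2 - v^2 - r^2) * huv
  have egoal : (X1-X2)^2 + (Y1-Y2)^2 = (p0-q0)^2 + (p1-q1)^2 := by
    rw [hX1, hY1, hX2, hY2]; field_simp; linear_combination ((p0-q0)^2 + (p1-q1)^2) * huv
  rw [← egoal]
  rcases hside with ⟨h1, h2⟩ | ⟨h1, h2⟩
  · exact key13 r X1 Y1 X2 Y2 hr (e1 ▸ hp1) (e2 ▸ hp2) (e3 ▸ hq1) (e4 ▸ hq2)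
      (by rw [hY1]; exact div_nonneg h1 hr.le)
      (by rw [hY2]; exact div_nonneg h2 hr.le)
  · have := key13 r X1 (-Y1) X2 (-Y2) hr (by rw [neg_sq, e1]; exact hp1) (by rw [neg_sq, e2]; exact hp2)
      (by rw [neg_sq, e3]; exact hq1) (by rw [neg_sq, e4]; exact hq2)
      (by rw [hY1, neg_nonneg]; exact div_nonpos_of_nonpos_of_nonneg h1 hr.le)
      (by rw [hY2, neg_nonneg]; exact div_nonpos_of_nonpos_of_nonneg h2 hr.le)
    nlinarith [this]

lemma dist_sq13 (x y : EuclideanSpace ℝ (Fin 2)) :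
    dist x y ^ 2 = (x 0 - y 0)^2 + (x 1 - y 1)^2 := by
  rw [EuclideanSpace.dist_eq, Real.sq_sqrt (by positivity)]
  simp [Fin.sum_univ_two, Real.dist_eq, sq_abs]

/-- Two points in the lens of two unit-distance disks, lying on the same closed
side of the line through the centers, are at distance at most the radius. -/
theorem stmt13 (B₁ B₂ P Q : BNC.Pt) (r : ℝ) (hr : 0 < r) (hB : dist B₁ B₂ = r)
    (hP1 : P ∈ Metric.closedBall B₁ r) (hP2 : P ∈ Metric.closedBall B₂ r)
    (hQ1 : Q ∈ Metric.closedBall B₁ r) (hQ2 : Q ∈ Metric.closedBall B₂ r)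
    (hside : (0 ≤ BNC.cross (B₂ - B₁) (P - B₁) ∧ 0 ≤ BNC.cross (B₂ - B₁) (Q - B₁)) ∨
             (BNC.cross (B₂ - B₁) (P - B₁) ≤ 0 ∧ BNC.cross (B₂ - B₁) (Q - B₁) ≤ 0)) :
    dist P Q ≤ r := by
  simp only [Metric.mem_closedBall] at hP1 hP2 hQ1 hQ2
  have huv : (B₂ 0 - B₁ 0)^2 + (B₂ 1 - B₁ 1)^2 = r^2 := by
    rw [← hB, dist_sq13]; ring
  have hp1 : (P 0 - B₁ 0)^2 + (P 1 - B₁ 1)^2 ≤ r^2 := by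
    rw [← dist_sq13]; exact pow_le_pow_left₀ dist_nonneg hP1 2
  have hp2 : ((P 0 - B₁ 0) - (B₂ 0 - B₁ 0))^2 + ((P 1 - B₁ 1) - (B₂ 1 - B₁ 1))^2 ≤ r^2 := by
    have h := pow_le_pow_left₀ (dist_nonneg (x := P) (y := B₂)) hP2 2
    rw [dist_sq13] at h; linarith [h]
  have hq1 : (Q 0 - B₁ 0)^2 + (Q 1 - B₁ 1)^2 ≤ r^2 := by
    rw [← dist_sq13]; exact pow_le_pow_left₀ dist_nonneg hQ1 2
  have hq2 : ((Q 0 - B₁ 0) - (B₂ 0 - B₁ 0))^2 + ((Q 1 - B₁ 1) - (B₂ 1 - B₁ 1))^2 ≤ r^2 := by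
    have h := pow_le_pow_left₀ (dist_nonneg (x := Q) (y := B₂)) hQ2 2
    rw [dist_sq13] at h; linarith [h]
  have hcP : BNC.cross (B₂ - B₁) (P - B₁)
      = (B₂ 0 - B₁ 0) * (P 1 - B₁ 1) - (B₂ 1 - B₁ 1) * (P 0 - B₁ 0) := by
    simp [BNC.cross]
  have hcQ : BNC.cross (B₂ - B₁) (Q - B₁)
      = (B₂ 0 - B₁ 0) * (Q 1 - B₁ 1) - (B₂ 1 - B₁ 1) * (Q 0 - B₁ 0) := by
    simp [BNC.cross]
  rw [hcP, hcQ] at hside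
  have hmain := lens13 r (B₂ 0 - B₁ 0) (B₂ 1 - B₁ 1) (P 0 - B₁ 0) (P 1 - B₁ 1)
    (Q 0 - B₁ 0) (Q 1 - B₁ 1) hr huv hp1 hp2 hq1 hq2 hside
  nlinarith [dist_nonneg (x := P) (y := Q), dist_sq13 P Q, hmain]
end
end

section
/- Let C, B₁, B₂ ∈ ℝ² with dist(C, B₁) = dist(C, B₂) = dist(B₁, B₂) = r > 0. If P and Q both lie in the closed ball of radius r centered at C and both lie on the closed side of the line through B₁ and B₂ not containing C, then dist(P, Q) ≤ r. -/
noncomputable section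

private lemma key14 (c0 c1 b0 b1 d0 d1 p0 p1 r : ℝ) (hr : 0 < r)
    (h1 : (c0-b0)^2+(c1-b1)^2 = r^2) (h2 : (c0-d0)^2+(c1-d1)^2 = r^2)
    (h3 : (b0-d0)^2+(b1-d1)^2 = r^2) (hp : (p0-c0)^2+(p1-c1)^2 ≤ r^2)
    (hside : ((d0-b0)*(c1-b1)-(d1-b1)*(c0-b0)) * ((d0-b0)*(p1-b1)-(d1-b1)*(p0-b0)) ≤ 0) :
    (p0-(b0+d0)/2)^2+(p1-(b1+d1)/2)^2 ≤ (r/2)^2 := by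
  set X : ℝ := (c0-(b0+d0)/2)*(p0-(b0+d0)/2) + (c1-(b1+d1)/2)*(p1-(b1+d1)/2) with hX
  have e1 : (d0-b0)*(c0-(b0+d0)/2) + (d1-b1)*(c1-(b1+d1)/2) = 0 := by
    linear_combination (h1 - h2)/2
  have hq : r^2 * X = ((d0-b0)*(c1-b1)-(d1-b1)*(c0-b0)) * ((d0-b0)*(p1-b1)-(d1-b1)*(p0-b0)) := by
    linear_combination (-X) * h3 + ((d0-b0)*(p0-(b0+d0)/2) + (d1-b1)*(p1-(b1+d1)/2)) * e1
  have hr2 : (0:ℝ) < r^2 := by positivity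
  have hXle : X ≤ 0 := by
    by_contra hX0
    exact absurd (hq ▸ hside) (not_le.mpr (mul_pos hr2 (lt_of_not_ge hX0)))
  have hcm : (c0-(b0+d0)/2)^2 + (c1-(b1+d1)/2)^2 = 3*r^2/4 := by
    linear_combination h1/2 + h2/2 - h3/4
  have hid : (p0-(b0+d0)/2)^2+(p1-(b1+d1)/2)^2
      = ((p0-c0)^2+(p1-c1)^2) + 2*X - ((c0-(b0+d0)/2)^2 + (c1-(b1+d1)/2)^2) := by
    rw [hX]; ring
  clear_value X
  rw [hid, hcm]
  linarith

private lemma dsq14 (x y : BNC.Pt) :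
    dist x y ^ 2 = (x 0 - y 0)^2 + (x 1 - y 1)^2 := by
  rw [EuclideanSpace.dist_eq, Real.sq_sqrt (by positivity)]
  simp [Fin.sum_univ_two, Real.dist_eq, sq_abs]

/-- Two points of the disk of radius `r` centered at the apex `C` of an
equilateral triangle `C B₁ B₂` of side `r`, lying on the closed side of the
line `B₁B₂` not containing `C`, are at distance at most `r`. -/
theorem stmt14 (C B₁ B₂ P Q : BNC.Pt) (r : ℝ) (hr : 0 < r)
    (h1 : dist C B₁ = r) (h2 : dist C B₂ = r) (h3 : dist B₁ B₂ = r)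
    (hP : P ∈ Metric.closedBall C r) (hQ : Q ∈ Metric.closedBall C r)
    (hPside : BNC.cross (B₂ - B₁) (C - B₁) * BNC.cross (B₂ - B₁) (P - B₁) ≤ 0)
    (hQside : BNC.cross (B₂ - B₁) (C - B₁) * BNC.cross (B₂ - B₁) (Q - B₁) ≤ 0) :
    dist P Q ≤ r := by
  set M : BNC.Pt := (2:ℝ)⁻¹ • (B₁ + B₂) with hM
  have hM0 : M 0 = (B₁ 0 + B₂ 0)/2 := by rw [hM]; simp; ring
  have hM1 : M 1 = (B₁ 1 + B₂ 1)/2 := by rw [hM]; simp; ring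
  have hcr : ∀ x : BNC.Pt,
      BNC.cross (B₂ - B₁) (x - B₁)
        = (B₂ 0 - B₁ 0)*(x 1 - B₁ 1) - (B₂ 1 - B₁ 1)*(x 0 - B₁ 0) := by
    intro x; simp [BNC.cross]
  have h1' : (C 0 - B₁ 0)^2 + (C 1 - B₁ 1)^2 = r^2 := by rw [← dsq14, h1]
  have h2' : (C 0 - B₂ 0)^2 + (C 1 - B₂ 1)^2 = r^2 := by rw [← dsq14, h2]
  have h3' : (B₁ 0 - B₂ 0)^2 + (B₁ 1 - B₂ 1)^2 = r^2 := by rw [← dsq14, h3]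
  have key : ∀ x : BNC.Pt, x ∈ Metric.closedBall C r →
      BNC.cross (B₂ - B₁) (C - B₁) * BNC.cross (B₂ - B₁) (x - B₁) ≤ 0 →
      dist x M ≤ r/2 := by
    intro x hx hxside
    have hx' : (x 0 - C 0)^2 + (x 1 - C 1)^2 ≤ r^2 := by
      rw [← dsq14]
      have := Metric.mem_closedBall.mp hx
      nlinarith [dist_nonneg (x := x) (y := C)]
    rw [hcr C, hcr x] at hxside
    have := key14 (C 0) (C 1) (B₁ 0) (B₁ 1) (B₂ 0) (B₂ 1) (x 0) (x 1) r hr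
      h1' h2' h3' hx' hxside
    have hd : dist x M ^ 2 ≤ (r/2)^2 := by
      rw [dsq14, hM0, hM1]; exact this
    nlinarith [dist_nonneg (x := x) (y := M), hr, hd]
  have hPM := key P hP hPside
  have hQM := key Q hQ hQside
  calc dist P Q ≤ dist P M + dist M Q := dist_triangle P M Q
    _ ≤ r/2 + r/2 := add_le_add hPM (by rwa [dist_comm])
    _ = r := by ring
end
end

section
/- Let u, w ∈ ℝ² be distinct with r = dist(u, w), and let the 'right side' be one of the two closed half-planes of the line through u and w. If P ≠ w lies in the set Π⁺ = {points on the right side with ∠ u P w ≥ π/3 and dist(P, u) ≥ r}, then π/3 ≤ ∠ u w P ≤ 2π/3 (unsigned angles). -/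
noncomputable section

/-- If `P ≠ w` lies in the region `Π⁺` attached to the segment `uw` (on a
chosen closed side of the line `uw`), then `π/3 ≤ ∠ u w P ≤ 2π/3`. -/
theorem stmt15 (u w P : BNC.Pt) (huw : u ≠ w) (r : ℝ) (hr : r = dist u w)
    (s : ℝ) (hs : s = 1 ∨ s = -1)
    (hside : 0 ≤ s * BNC.cross (w - u) (P - u))
    (hPw : P ≠ w)
    (hang : Real.pi / 3 ≤ EuclideanGeometry.angle u P w)
    (hdist : r ≤ dist P u) :
    Real.pi / 3 ≤ EuclideanGeometry.angle u w P ∧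
      EuclideanGeometry.angle u w P ≤ 2 * Real.pi / 3  := by
  have hr0 : 0 < r := hr ▸ dist_pos.2 huw
  have hPu : P ≠ u := by
    intro h; rw [h, dist_self] at hdist; linarith
  set a := dist w P with ha
  set b := dist u P with hb
  set c := dist u w with hc
  have ha0 : 0 < a := dist_pos.2 (Ne.symm hPw)
  have hc0 : 0 < c := dist_pos.2 huw
  have hbc : c ≤ b := by rw [hb, dist_comm]; exact le_trans (le_of_eq hr.symm) hdist
  have hb0 : 0 < b := lt_of_lt_of_le (hr ▸ hr0 : (0:ℝ) < c) hbc
  have htri : a ≤ c + b := by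
    rw [ha, hb, hc, dist_comm u w]; exact dist_triangle w u P
  -- law of cosines at P
  have hlawP := EuclideanGeometry.law_cos u P w
  -- law of cosines at w
  have hlawW := EuclideanGeometry.law_cos u w P
  have hCle : EuclideanGeometry.angle u P w ≤ Real.pi := EuclideanGeometry.angle_le_pi _ _ _
  have hcosC : Real.cos (EuclideanGeometry.angle u P w) ≤ 1/2 := by
    have := Real.cos_le_cos_of_nonneg_of_le_pi (by positivity) hCle hang
    rwa [Real.cos_pi_div_three] at this
  -- translate law of cosines at P into an inequality
  have key1 : a^2 + b^2 - c^2 ≤ a * b := by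
    rw [← hc, ← hb, ← ha] at hlawP
    nlinarith [mul_le_mul_of_nonneg_left hcosC (by positivity : (0:ℝ) ≤ 2 * b * a)]
  have key2 : a^2 + c^2 - b^2 ≤ a * c := by nlinarith
  have hcosB : Real.cos (EuclideanGeometry.angle u w P) ≤ 1/2 := by
    rw [← hc, ← hb, dist_comm P w, ← ha] at hlawW
    by_contra hgt
    push_neg at hgt
    nlinarith [mul_lt_mul_of_pos_left hgt (by positivity : (0:ℝ) < 2 * c * a)]
  have hBle : EuclideanGeometry.angle u w P ≤ Real.pi := EuclideanGeometry.angle_le_pi _ _ _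
  have hB0 : 0 ≤ EuclideanGeometry.angle u w P := EuclideanGeometry.angle_nonneg _ _ _
  constructor
  · by_contra hlt
    push_neg at hlt
    have := Real.strictAntiOn_cos ⟨hB0, hBle⟩
      ⟨by positivity, by linarith [Real.pi_pos]⟩ hlt
    rw [Real.cos_pi_div_three] at this
    linarith
  · have hsum := EuclideanGeometry.angle_add_angle_add_angle_eq_pi (p₁ := u)
      P (Ne.symm huw)
    have hA0 : 0 ≤ EuclideanGeometry.angle P u w := EuclideanGeometry.angle_nonneg _ _ _
    have : EuclideanGeometry.angle w P u = EuclideanGeometry.angle u P w :=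
      EuclideanGeometry.angle_comm _ _ _
    linarith
end
end

section
/- There do not exist two distinct feasible diagonals of positive polarity with the same pole; that is, there are no indices i, j, k with j ∈ ⟨i+1..k−1⟩ such that (i,k) and (j,k) are both feasible diagonals, all points v_{i+1},…,v_{k−1} lie in Π⁺(i,k), and all points v_{j+1},…,v_{k−1} lie in Π⁺(j,k). Symmetrically, no two distinct feasible diagonals of negative polarity have the same pole. -/
noncomputable section

section Stmt16Aux
open InnerProductGeometry RealInnerProductSpace EuclideanGeometry Real

/-! ### Auxiliary lemmas for `stmt16` -/

-- ZMod arc lemmas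

lemma mem_arc_iff {n : ℕ} [NeZero n] {i j x : ZMod n} :
    x ∈ BNC.arc i j ↔ (x - i).val ≤ (j - i).val := by
  simp only [BNC.arc, Finset.mem_image, Finset.mem_range, Nat.lt_succ_iff]
  constructor
  · rintro ⟨t, ht, rfl⟩
    rwa [add_sub_cancel_left, ZMod.val_cast_of_lt (lt_of_le_of_lt ht (ZMod.val_lt _))]
  · intro h
    exact ⟨(x - i).val, h, by rw [ZMod.natCast_zmod_val, add_sub_cancel]⟩

lemma self_mem_arc {n : ℕ} [NeZero n] (i j : ZMod n) : i ∈ BNC.arc i j := by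
  rw [mem_arc_iff]; simp

lemma right_mem_arc {n : ℕ} [NeZero n] (i j : ZMod n) : j ∈ BNC.arc i j := by
  rw [mem_arc_iff]

lemma zmod_val_add_one {n : ℕ} [NeZero n] {d : ZMod n} (h : d ≠ -1) :
    (d + 1).val = d.val + 1 := by
  have hlt : d.val < n := ZMod.val_lt d
  have hne : d.val + 1 ≠ n := by
    intro he
    apply h
    have h1 : d = ((d.val : ℕ) : ZMod n) := (ZMod.natCast_zmod_val d).symm
    rw [h1]
    have he2 : ((d.val : ℕ) : ZMod n) + 1 = 0 := by
      rw [show ((d.val : ℕ) : ZMod n) + 1 = (((d.val + 1 : ℕ)) : ZMod n) by push_cast; ring, he]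
      exact ZMod.natCast_self n
    linear_combination he2
  have hlt2 : d.val + 1 < n := lt_of_le_of_ne hlt hne
  rw [show d + 1 = (((d.val + 1 : ℕ)) : ZMod n) by rw [Nat.cast_add, ZMod.natCast_zmod_val]; push_cast; ring]
  exact ZMod.val_cast_of_lt hlt2

lemma zmod_val_neg_one {n : ℕ} [NeZero n] (hn : 4 ≤ n) : (-1 : ZMod n).val = n - 1 := by
  rw [show (-1 : ZMod n) = ((n - 1 : ℕ) : ZMod n) by
    rw [Nat.cast_sub (by omega : 1 ≤ n), ZMod.natCast_self]; ring]
  exact ZMod.val_cast_of_lt (by omega)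

lemma zmod_val_neg_two {n : ℕ} [NeZero n] (hn : 4 ≤ n) : (-2 : ZMod n).val = n - 2 := by
  rw [show (-2 : ZMod n) = ((n - 2 : ℕ) : ZMod n) by
    rw [Nat.cast_sub (by omega : 2 ≤ n), ZMod.natCast_self]; push_cast; ring]
  exact ZMod.val_cast_of_lt (by omega)

lemma succ_mem_arc {n : ℕ} [NeZero n] {i j x : ZMod n} (hx : x ∈ BNC.arc i j)
    (hne : x ≠ j) : x + 1 ∈ BNC.arc i j := by
  rw [mem_arc_iff] at hx ⊢
  have hd : x - i ≠ j - i := fun h => hne (by linear_combination h)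
  have hlt : (x - i).val < (j - i).val :=
    lt_of_le_of_ne hx (fun h => hd (ZMod.val_injective n h))
  have hne1 : x - i ≠ -1 := by
    intro h
    have hn : 0 < n := Nat.pos_of_ne_zero (NeZero.ne n)
    have h2 : (x - i).val = n - 1 := by
      rw [h, show (-1 : ZMod n) = ((n - 1 : ℕ) : ZMod n) by
        rw [Nat.cast_sub (by omega : 1 ≤ n), ZMod.natCast_self]; ring]
      exact ZMod.val_cast_of_lt (by omega)
    have := ZMod.val_lt (j - i)
    omega
  rw [show x + 1 - i = (x - i) + 1 by ring, zmod_val_add_one hne1]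
  omega

lemma pred_mem_arc {n : ℕ} [NeZero n] {i j x : ZMod n} (hx : x ∈ BNC.arc i j)
    (hne : x ≠ i) : x - 1 ∈ BNC.arc i j := by
  rw [mem_arc_iff] at hx ⊢
  have h0 : x - i ≠ 0 := sub_ne_zero.mpr hne
  have hne1 : x - 1 - i ≠ -1 := by
    intro h
    exact h0 (by linear_combination h)
  have := zmod_val_add_one hne1
  rw [show x - 1 - i + 1 = x - i by ring] at this
  omega

lemma aux_self_not_mem {n : ℕ} [NeZero n] {i k : ZMod n} (hn : 4 ≤ n)
    (h1 : k ≠ i + 1) (h : i ∈ BNC.arc (i + 1) (k - 1)) : False := by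
  rw [mem_arc_iff] at h
  rw [show i - (i + 1) = -1 by ring] at h
  rw [zmod_val_neg_one hn] at h
  have hlt := ZMod.val_lt (k - 1 - (i + 1))
  have he : (k - 1 - (i + 1)).val = n - 1 := by omega
  have : k - 1 - (i + 1) = -1 := by
    apply ZMod.val_injective
    rw [he, zmod_val_neg_one hn]
  exact h1 (by linear_combination this)

lemma aux_pred_not_mem {n : ℕ} [NeZero n] {i k : ZMod n} (hn : 4 ≤ n)
    (h0 : k ≠ i) (h1 : k ≠ i + 1) (h : i - 1 ∈ BNC.arc (i + 1) (k - 1)) : False := by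
  rw [mem_arc_iff] at h
  rw [show i - 1 - (i + 1) = -2 by ring] at h
  rw [zmod_val_neg_two hn] at h
  have hlt := ZMod.val_lt (k - 1 - (i + 1))
  rcases (by omega : (k - 1 - (i + 1)).val = n - 2 ∨ (k - 1 - (i + 1)).val = n - 1) with he | he
  · have : k - 1 - (i + 1) = -2 := by
      apply ZMod.val_injective
      rw [he, zmod_val_neg_two hn]
    exact h0 (by linear_combination this)
  · have : k - 1 - (i + 1) = -1 := by
      apply ZMod.val_injective
      rw [he, zmod_val_neg_one hn]
    exact h1 (by linear_combination this)

lemma aux_self_not_mem' {n : ℕ} [NeZero n] {k a : ZMod n} (hn : 4 ≤ n)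
    (h1 : a ≠ k + 1) (h : a ∈ BNC.arc (k + 1) (a - 1)) : False := by
  rw [mem_arc_iff] at h
  have hne : a - 1 - (k + 1) ≠ -1 := by
    intro he; exact h1 (by linear_combination he)
  have := zmod_val_add_one hne
  rw [show a - 1 - (k + 1) + 1 = a - (k + 1) by ring] at this
  omega

lemma aux_succ_not_mem' {n : ℕ} [NeZero n] {k a : ZMod n} (hn : 4 ≤ n)
    (h0 : a ≠ k) (h1 : a ≠ k + 1) (h : a + 1 ∈ BNC.arc (k + 1) (a - 1)) : False := by
  rw [mem_arc_iff] at h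
  have hne : a - 1 - (k + 1) ≠ -1 := by
    intro he; exact h1 (by linear_combination he)
  have hne2 : a - 1 - (k + 1) + 1 ≠ -1 := by
    intro he; exact h0 (by linear_combination he)
  have e1 := zmod_val_add_one hne
  have e2 := zmod_val_add_one hne2
  rw [e1] at e2
  rw [show a - 1 - (k + 1) + 1 + 1 = a + 1 - (k + 1) by ring] at e2
  omega

-- injectivity of the vertex map

lemma v_inj {n : ℕ} [NeZero n] (hn : 4 ≤ n) {v : ZMod n → BNC.Pt}
    (hv : BNC.ConvexCCW v) {a b : ZMod n} (h : a ≠ b) : v a ≠ v b := by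
  have hone : (1 : ZMod n) ≠ 0 := by
    intro he
    have : ((1 : ℕ) : ZMod n).val = 1 := ZMod.val_cast_of_lt (by omega)
    rw [show ((1:ℕ) : ZMod n) = (1 : ZMod n) by push_cast; ring, he, ZMod.val_zero] at this
    omega
  have htwo : (2 : ZMod n) ≠ 0 := by
    intro he
    have : ((2 : ℕ) : ZMod n).val = 2 := ZMod.val_cast_of_lt (by omega)
    rw [show ((2:ℕ) : ZMod n) = (2 : ZMod n) by push_cast; ring, he, ZMod.val_zero] at this
    omega
  by_cases hb : b = a + 1
  · subst hb
    have h0 := hv (a + 1) a (by intro he; exact hone (by linear_combination -he))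
      (by intro he; exact htwo (by linear_combination -he))
    intro he
    rw [← he] at h0
    simp [BNC.cross, sub_self] at h0
  · have h0 := hv a b (Ne.symm h) hb
    intro he
    rw [← he] at h0
    simp [BNC.cross, sub_self] at h0

-- planar geometry helpers

lemma euclid_angle_eq (A B C : BNC.Pt) :
    ∠ A B C = InnerProductGeometry.angle (A - B) (C - B) := by
  rw [EuclideanGeometry.angle]; norm_num

lemma collinear_of_cross_zero {A B K : BNC.Pt} (hAK : A ≠ K)
    (h : BNC.cross (A - K) (B - K) = 0) : Collinear ℝ ({A, B, K} : Set BNC.Pt) := by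
  set u := A - K with hu
  set w := B - K with hw
  have hu0 : u ≠ 0 := sub_ne_zero.mpr hAK
  have hex : ∃ r : ℝ, w = r • u := by
    by_cases h0 : u 0 ≠ 0
    · refine ⟨w 0 / u 0, ?_⟩
      ext i
      fin_cases i
      · simp [div_mul_cancel₀, h0]
      · simp only [PiLp.smul_apply, smul_eq_mul]
        have : u 0 * w 1 = u 1 * w 0 := by simpa [BNC.cross, sub_eq_zero] using h
        field_simp
        simp only [Fin.mk_one]
        linarith [this]
    · push_neg at h0
      have h1 : u 1 ≠ 0 := by
        intro h1; apply hu0; ext i; fin_cases i <;> simp [h0, h1]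
      refine ⟨w 1 / u 1, ?_⟩
      ext i
      fin_cases i
      · simp only [PiLp.smul_apply, smul_eq_mul]
        have : u 0 * w 1 = u 1 * w 0 := by simpa [BNC.cross, sub_eq_zero] using h
        have hw0 : w 0 = 0 := by
          rcases mul_eq_zero.mp (by rw [h0] at this; linarith [this] : u 1 * w 0 = 0) with h' | h'
          · exact absurd h' h1
          · exact h'
        simp [hw0, h0]
      · simp [div_mul_cancel₀, h1]
  obtain ⟨r, hr⟩ := hex
  rw [collinear_iff_of_mem (show K ∈ ({A, B, K} : Set BNC.Pt) by simp)]
  refine ⟨u, ?_⟩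
  rintro p (rfl | rfl | rfl)
  · exact ⟨1, by simp [hu]⟩
  · exact ⟨r, by rw [← hr]; simp [hw]⟩
  · exact ⟨0, by simp⟩

lemma cross_zero_of_collinear {A B K : BNC.Pt} (h : Collinear ℝ ({A, B, K} : Set BNC.Pt)) :
    BNC.cross (A - K) (B - K) = 0 := by
  rw [collinear_iff_of_mem (show K ∈ ({A, B, K} : Set BNC.Pt) by simp)] at h
  obtain ⟨d, hd⟩ := h
  obtain ⟨ra, ha⟩ := hd A (by simp)
  obtain ⟨rb, hb⟩ := hd B (by simp)
  have h1 : A - K = ra • d := by rw [ha]; simp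
  have h2 : B - K = rb • d := by rw [hb]; simp
  rw [h1, h2]
  simp [BNC.cross]
  ring

lemma degen {A B K : BNC.Pt} (hBK : B ≠ K) (hAB : A ≠ B)
    (a1 : π / 3 ≤ ∠ A B K) (d1 : dist A K ≤ dist A B)
    (hcol : Collinear ℝ ({A, B, K} : Set BNC.Pt)) : False := by
  have hpi := Real.pi_pos
  rcases hcol.wbtw_or_wbtw_or_wbtw with hw | hw | hw
  · have h := hw.dist_add_dist
    have : dist B K ≤ 0 := by linarith
    exact hBK (by simpa [dist_le_zero] using this)
  · have h0 : ∠ K B A = 0 := hw.angle₂₁₃_eq_zero_of_ne (Ne.symm hBK)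
    rw [EuclideanGeometry.angle_comm] at h0
    rw [h0] at a1; linarith
  · have h0 : ∠ A B K = 0 := hw.symm.angle₂₁₃_eq_zero_of_ne hAB
    rw [h0] at a1; linarith

lemma angle_transfer {P Q R : BNC.Pt} (hQR : Q ≠ R) (hPR : P ≠ R)
    (h1 : π / 3 ≤ ∠ P Q R) (h2 : dist P R ≤ dist P Q) : π / 3 ≤ ∠ P R Q := by
  have hpi := Real.pi_pos
  have ha0 : 0 < dist Q R := dist_pos.mpr hQR
  have hb0 : 0 < dist P R := dist_pos.mpr hPR
  have hc0 : 0 < dist P Q := lt_of_lt_of_le hb0 h2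
  have hmemQ : ∠ P Q R ∈ Set.Icc 0 π :=
    ⟨EuclideanGeometry.angle_nonneg _ _ _, EuclideanGeometry.angle_le_pi _ _ _⟩
  have hmem3 : π / 3 ∈ Set.Icc 0 π := ⟨by linarith, by linarith⟩
  have hcosQ : Real.cos (∠ P Q R) ≤ 1 / 2 := by
    rw [← Real.cos_pi_div_three]
    exact Real.strictAntiOn_cos.antitoneOn hmem3 hmemQ h1
  have lc1 := EuclideanGeometry.law_cos P Q R
  have lc2 := EuclideanGeometry.law_cos P R Q
  rw [dist_comm R Q] at lc1
  set a := dist Q R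
  set b := dist P R
  set c := dist P Q
  have key1 : c * c + a * a - c * a ≤ b * b := by nlinarith [mul_pos hc0 ha0]
  have hac : a ≤ c := by nlinarith
  have key2 : b * b + a * a - b * a ≤ c * c := by
    rcases le_total a b with h | h <;> nlinarith
  have hcosR : Real.cos (∠ P R Q) ≤ 1 / 2 := by nlinarith [mul_pos hb0 ha0]
  by_contra hlt
  push_neg at hlt
  have := Real.strictAntiOn_cos
    ⟨EuclideanGeometry.angle_nonneg P R Q, EuclideanGeometry.angle_le_pi P R Q⟩ hmem3 hlt
  rw [Real.cos_pi_div_three] at this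
  linarith

lemma sin_mul_eq {u w : BNC.Pt} (h : 0 ≤ BNC.cross u w) :
    Real.sin (InnerProductGeometry.angle u w) * (‖u‖ * ‖w‖) = BNC.cross u w := by
  rw [sin_angle_mul_norm_mul_norm]
  have lag : ⟪u, u⟫ * ⟪w, w⟫ - ⟪u, w⟫ * ⟪u, w⟫ = BNC.cross u w ^ 2 := by
    simp only [PiLp.inner_apply, Fin.sum_univ_two, BNC.cross, RCLike.inner_apply, conj_trivial]; ring
  rw [lag, Real.sqrt_sq h]

lemma angle_addition {u w z : BNC.Pt} (hu : u ≠ 0) (hw : w ≠ 0) (hz : z ≠ 0)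
    (c1 : 0 ≤ BNC.cross u w) (c2 : 0 ≤ BNC.cross w z) (c3 : 0 ≤ BNC.cross u z) :
    Real.sin (InnerProductGeometry.angle u w + InnerProductGeometry.angle w z)
      = Real.sin (InnerProductGeometry.angle u z) ∧
    Real.cos (InnerProductGeometry.angle u w + InnerProductGeometry.angle w z)
      = Real.cos (InnerProductGeometry.angle u z) := by
  have nu : (0:ℝ) < ‖u‖ := norm_pos_iff.mpr hu
  have nw : (0:ℝ) < ‖w‖ := norm_pos_iff.mpr hw
  have nz : (0:ℝ) < ‖z‖ := norm_pos_iff.mpr hz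
  have hs1 := sin_mul_eq c1
  have hs2 := sin_mul_eq c2
  have hs3 := sin_mul_eq c3
  have hc1 := cos_angle_mul_norm_mul_norm u w
  have hc2 := cos_angle_mul_norm_mul_norm w z
  have hc3 := cos_angle_mul_norm_mul_norm u z
  have hW : ⟪w, w⟫ = ‖w‖ * ‖w‖ := real_inner_self_eq_norm_mul_norm w
  have I1 : BNC.cross u z * ⟪w,w⟫ = ⟪u,w⟫ * BNC.cross w z + BNC.cross u w * ⟪w,z⟫ := by
    simp only [PiLp.inner_apply, Fin.sum_univ_two, BNC.cross, RCLike.inner_apply, conj_trivial]; ring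
  have I2 : ⟪u,z⟫ * ⟪w,w⟫ = ⟪u,w⟫ * ⟪w,z⟫ - BNC.cross u w * BNC.cross w z := by
    simp only [PiLp.inner_apply, Fin.sum_univ_two, BNC.cross, RCLike.inner_apply, conj_trivial]; ring
  have hX : (0:ℝ) < ‖u‖ * ‖w‖ * ‖w‖ * ‖z‖ := by positivity
  constructor
  · have e1 : Real.sin (InnerProductGeometry.angle u w + InnerProductGeometry.angle w z)
        * (‖u‖ * ‖w‖ * ‖w‖ * ‖z‖)
        = Real.sin (InnerProductGeometry.angle u z) * (‖u‖ * ‖w‖ * ‖w‖ * ‖z‖) := by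
      rw [Real.sin_add]
      calc (Real.sin (InnerProductGeometry.angle u w) * Real.cos (InnerProductGeometry.angle w z)
            + Real.cos (InnerProductGeometry.angle u w) * Real.sin (InnerProductGeometry.angle w z))
            * (‖u‖ * ‖w‖ * ‖w‖ * ‖z‖)
          = (Real.sin (InnerProductGeometry.angle u w) * (‖u‖ * ‖w‖))
              * (Real.cos (InnerProductGeometry.angle w z) * (‖w‖ * ‖z‖))
            + (Real.cos (InnerProductGeometry.angle u w) * (‖u‖ * ‖w‖))
              * (Real.sin (InnerProductGeometry.angle w z) * (‖w‖ * ‖z‖)) := by ring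
        _ = BNC.cross u w * ⟪w,z⟫ + ⟪u,w⟫ * BNC.cross w z := by rw [hs1, hc2, hc1, hs2]
        _ = BNC.cross u z * ⟪w,w⟫ := by rw [I1]; ring
        _ = (Real.sin (InnerProductGeometry.angle u z) * (‖u‖ * ‖z‖)) * (‖w‖ * ‖w‖) := by
              rw [hs3, hW]
        _ = Real.sin (InnerProductGeometry.angle u z) * (‖u‖ * ‖w‖ * ‖w‖ * ‖z‖) := by ring
    exact mul_right_cancel₀ (ne_of_gt hX) e1
  · have e2 : Real.cos (InnerProductGeometry.angle u w + InnerProductGeometry.angle w z)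
        * (‖u‖ * ‖w‖ * ‖w‖ * ‖z‖)
        = Real.cos (InnerProductGeometry.angle u z) * (‖u‖ * ‖w‖ * ‖w‖ * ‖z‖) := by
      rw [Real.cos_add]
      calc (Real.cos (InnerProductGeometry.angle u w) * Real.cos (InnerProductGeometry.angle w z)
            - Real.sin (InnerProductGeometry.angle u w) * Real.sin (InnerProductGeometry.angle w z))
            * (‖u‖ * ‖w‖ * ‖w‖ * ‖z‖)
          = (Real.cos (InnerProductGeometry.angle u w) * (‖u‖ * ‖w‖))
              * (Real.cos (InnerProductGeometry.angle w z) * (‖w‖ * ‖z‖))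
            - (Real.sin (InnerProductGeometry.angle u w) * (‖u‖ * ‖w‖))
              * (Real.sin (InnerProductGeometry.angle w z) * (‖w‖ * ‖z‖)) := by ring
        _ = ⟪u,w⟫ * ⟪w,z⟫ - BNC.cross u w * BNC.cross w z := by rw [hs1, hc2, hc1, hs2]
        _ = ⟪u,z⟫ * ⟪w,w⟫ := by rw [I2]
        _ = (Real.cos (InnerProductGeometry.angle u z) * (‖u‖ * ‖z‖)) * (‖w‖ * ‖w‖) := by
              rw [hc3, hW]
        _ = Real.cos (InnerProductGeometry.angle u z) * (‖u‖ * ‖w‖ * ‖w‖ * ‖z‖) := by ring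
    exact mul_right_cancel₀ (ne_of_gt hX) e2

lemma core {A B C K : BNC.Pt}
    (hAK : A ≠ K) (hBK : B ≠ K) (hCK : C ≠ K) (hAB : A ≠ B) (hAC : A ≠ C)
    (c1 : 0 ≤ BNC.cross (A - K) (B - K))
    (c2 : 0 ≤ BNC.cross (A - K) (C - K))
    (c3 : 0 < BNC.cross (B - K) (C - K))
    (a1 : π / 3 ≤ ∠ A B K) (d1 : dist A K ≤ dist A B)
    (a2 : π / 3 ≤ ∠ A C K) (d2 : dist A K ≤ dist A C)
    (a3 : π / 3 ≤ ∠ B C K) (d3 : dist B K ≤ dist B C) : False := by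
  have hpi := Real.pi_pos
  rcases eq_or_lt_of_le c1 with hc1 | hc1
  · exact degen hBK hAB a1 d1 (collinear_of_cross_zero hAK hc1.symm)
  rcases eq_or_lt_of_le c2 with hc2 | hc2
  · exact degen hCK hAC a2 d2 (collinear_of_cross_zero hAK hc2.symm)
  set u := A - K with hu
  set w := B - K with hw
  set z := C - K with hz
  have hu0 : u ≠ 0 := sub_ne_zero.mpr hAK
  have hw0 : w ≠ 0 := sub_ne_zero.mpr hBK
  have hz0 : z ≠ 0 := sub_ne_zero.mpr hCK
  set θ1 := InnerProductGeometry.angle u w with ht1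
  set θ2 := InnerProductGeometry.angle w z with ht2
  set θ3 := InnerProductGeometry.angle u z with ht3
  obtain ⟨hsin, hcos⟩ := angle_addition hu0 hw0 hz0 c1 c3.le c2
  have ht1e : θ1 = ∠ A K B := (euclid_angle_eq A K B).symm
  have ht2e : θ2 = ∠ B K C := (euclid_angle_eq B K C).symm
  have ht3e : θ3 = ∠ A K C := (euclid_angle_eq A K C).symm
  have h1 : π / 3 ≤ θ1 := by rw [ht1e]; exact angle_transfer hBK hAK a1 d1
  have h2 : π / 3 ≤ θ2 := by rw [ht2e]; exact angle_transfer hCK hBK a3 d3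
  have nu : (0:ℝ) < ‖u‖ := norm_pos_iff.mpr hu0
  have nz : (0:ℝ) < ‖z‖ := norm_pos_iff.mpr hz0
  have hs3pos : 0 < Real.sin θ3 := by
    have := sin_mul_eq c2
    nlinarith [mul_pos nu nz]
  have ht1le : θ1 ≤ π := InnerProductGeometry.angle_le_pi u w
  have ht2le : θ2 ≤ π := InnerProductGeometry.angle_le_pi w z
  have hx_lt : θ1 + θ2 < π := by
    by_contra hge
    push_neg at hge
    have hs : 0 ≤ Real.sin (θ1 + θ2 - π) :=
      Real.sin_nonneg_of_nonneg_of_le_pi (by linarith) (by linarith)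
    rw [Real.sin_sub, Real.sin_pi, Real.cos_pi] at hs
    rw [hsin] at hs
    nlinarith
  have h23 : Real.cos (2 * π / 3) = -(1/2) := by
    rw [show 2 * π / 3 = π - π / 3 by ring, Real.cos_pi_sub, Real.cos_pi_div_three]
  have hcosle : Real.cos θ3 ≤ -(1/2) := by
    rw [← hcos, ← h23]
    exact Real.strictAntiOn_cos.antitoneOn ⟨by linarith, by linarith⟩
      ⟨by linarith, hx_lt.le⟩ (by linarith)
  have ht3ge : 2 * π / 3 ≤ θ3 := by
    by_contra hlt
    push_neg at hlt
    have := Real.strictAntiOn_cos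
      ⟨InnerProductGeometry.angle_nonneg u z, InnerProductGeometry.angle_le_pi u z⟩
      ⟨by linarith, by linarith⟩ hlt
    rw [h23] at this
    linarith
  have hsum := EuclideanGeometry.angle_add_angle_add_angle_eq_pi (p₁ := K) C hAK
  have hCKA : ∠ C K A = θ3 := by rw [ht3e, EuclideanGeometry.angle_comm]
  have hKAC0 : 0 < ∠ K A C := by
    rcases (EuclideanGeometry.angle_nonneg K A C).eq_or_lt with h0 | h0
    · exfalso
      have hcol := EuclideanGeometry.collinear_of_angle_eq_zero h0.symm
      have hset : ({K, A, C} : Set BNC.Pt) = ({A, C, K} : Set BNC.Pt) := by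
        ext x; constructor <;> (rintro (rfl|rfl|rfl) <;> simp)
      rw [hset] at hcol
      exact (ne_of_gt hc2) (cross_zero_of_collinear hcol)
    · exact h0
  rw [hCKA] at hsum
  have hACK : π / 3 ≤ ∠ A C K := a2
  linarith

-- reflection

def refl2 (p : BNC.Pt) : BNC.Pt :=
  EuclideanSpace.single 0 (p 0) - EuclideanSpace.single 1 (p 1)

@[simp] lemma refl2_apply0 (p : BNC.Pt) : refl2 p 0 = p 0 := by
  simp [refl2, EuclideanSpace.single_apply]
@[simp] lemma refl2_apply1 (p : BNC.Pt) : refl2 p 1 = -(p 1) := by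
  simp [refl2, EuclideanSpace.single_apply]

lemma refl2_sub (p q : BNC.Pt) : refl2 p - refl2 q = refl2 (p - q) := by
  ext i; fin_cases i <;> (simp; try ring)

lemma inner_refl2 (u w : BNC.Pt) : ⟪refl2 u, refl2 w⟫ = ⟪u, w⟫ := by
  simp [PiLp.inner_apply, Fin.sum_univ_two]

lemma norm_refl2 (u : BNC.Pt) : ‖refl2 u‖ = ‖u‖ := by
  have h1 : ‖refl2 u‖ ^ 2 = ‖u‖ ^ 2 := by
    rw [← real_inner_self_eq_norm_sq, ← real_inner_self_eq_norm_sq, inner_refl2]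
  have h2 := norm_nonneg (refl2 u)
  have h3 := norm_nonneg u
  nlinarith

lemma dist_refl2 (p q : BNC.Pt) : dist (refl2 p) (refl2 q) = dist p q := by
  rw [dist_eq_norm, dist_eq_norm, refl2_sub, norm_refl2]

lemma cross_refl2 (u w : BNC.Pt) : BNC.cross (refl2 u) (refl2 w) = - BNC.cross u w := by
  simp [BNC.cross]; ring

lemma angle_refl2 (a b c : BNC.Pt) : ∠ (refl2 a) (refl2 b) (refl2 c) = ∠ a b c := by
  rw [euclid_angle_eq, euclid_angle_eq, refl2_sub, refl2_sub,
    InnerProductGeometry.angle, InnerProductGeometry.angle,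
    inner_refl2, norm_refl2, norm_refl2]

lemma refl2_ne {p q : BNC.Pt} (h : p ≠ q) : refl2 p ≠ refl2 q := by
  intro he
  apply h
  ext i
  have h0 := congrFun (congrArg (fun (x : BNC.Pt) (i : Fin 2) => x i) he) 0
  have h1 := congrFun (congrArg (fun (x : BNC.Pt) (i : Fin 2) => x i) he) 1
  simp at h0 h1
  fin_cases i <;> simpa

end Stmt16Aux

/-- No two distinct feasible diagonals of positive polarity have the same pole,
and no two distinct feasible diagonals of negative polarity have the same pole. -/
theorem stmt16 (n : ℕ) [NeZero n] (hn : 4 ≤ n) (hEven : Even n)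
    (v : ZMod n → BNC.Pt) (hv : BNC.ConvexCCW v) :
    (¬ ∃ i j k : ZMod n, j ∈ BNC.arc (i + 1) (k - 1) ∧
        BNC.Feasible i k ∧ BNC.IsDiagPair i k ∧
        BNC.Feasible j k ∧ BNC.IsDiagPair j k ∧
        (∀ l ∈ BNC.arc (i + 1) (k - 1), v l ∈ BNC.PiPlus v i k) ∧
        (∀ l ∈ BNC.arc (j + 1) (k - 1), v l ∈ BNC.PiPlus v j k)) ∧
    (¬ ∃ k a b : ZMod n, b ∈ BNC.arc (k + 1) (a - 1) ∧
        BNC.Feasible k a ∧ BNC.IsDiagPair k a ∧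
        BNC.Feasible k b ∧ BNC.IsDiagPair k b ∧
        (∀ l ∈ BNC.arc (k + 1) (a - 1), v l ∈ BNC.PiMinus v k a) ∧
        (∀ l ∈ BNC.arc (k + 1) (b - 1), v l ∈ BNC.PiMinus v k b)) := by
  constructor
  · rintro ⟨i, j, k, hj, -, ⟨hik, hki1, hik1⟩, -, ⟨hjk, hkj1, hjk1⟩, H1, H2⟩
    have hjk' : j ≠ k - 1 := by
      intro h; exact hkj1 (by rw [h]; ring)
    have hl1 : j + 1 ∈ BNC.arc (i + 1) (k - 1) := succ_mem_arc hj hjk'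
    have hl2 : j + 1 ∈ BNC.arc (j + 1) (k - 1) := self_mem_arc _ _
    have hij : i ≠ j := by
      intro h; rw [← h] at hj; exact aux_self_not_mem hn hki1 hj
    have hij1 : i ≠ j + 1 := by
      intro h
      have hj' : j = i - 1 := by linear_combination -h
      rw [hj'] at hj
      exact aux_pred_not_mem hn hik.symm hki1 hj
    obtain ⟨hr1, ha1, hd1⟩ := H1 j hj
    obtain ⟨hr2, ha2, hd2⟩ := H1 (j+1) hl1
    obtain ⟨hr3, ha3, hd3⟩ := H2 (j+1) hl2
    have hvAK : v i ≠ v k := v_inj hn hv hik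
    have hvBK : v j ≠ v k := v_inj hn hv hjk
    have hvCK : v (j+1) ≠ v k := v_inj hn hv (Ne.symm hkj1)
    have hvAB : v i ≠ v j := v_inj hn hv hij
    have hvAC : v i ≠ v (j+1) := v_inj hn hv hij1
    simp only [BNC.rightClosed, Set.mem_setOf_eq] at hr1 hr2
    have hc1 : 0 ≤ BNC.cross (v i - v k) (v j - v k) := by
      have hid : BNC.cross (v i - v k) (v j - v k)
          = - BNC.cross (v k - v i) (v j - v i) := by simp [BNC.cross]; ring
      rw [hid]; linarith
    have hc2 : 0 ≤ BNC.cross (v i - v k) (v (j+1) - v k) := by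
      have hid : BNC.cross (v i - v k) (v (j+1) - v k)
          = - BNC.cross (v k - v i) (v (j+1) - v i) := by simp [BNC.cross]; ring
      rw [hid]; linarith
    have hc3 : 0 < BNC.cross (v j - v k) (v (j+1) - v k) := by
      have h0 := hv j k (Ne.symm hjk) hkj1
      have hid : BNC.cross (v j - v k) (v (j+1) - v k)
          = BNC.cross (v (j+1) - v j) (v k - v j) := by simp [BNC.cross]; ring
      rw [hid]; exact h0
    exact core hvAK hvBK hvCK hvAB hvAC hc1 hc2 hc3
      ha1 (by rw [dist_comm (v j) (v i)] at hd1; exact hd1)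
      ha2 (by rw [dist_comm (v (j+1)) (v i)] at hd2; exact hd2)
      ha3 (by rw [dist_comm (v (j+1)) (v j)] at hd3; exact hd3)
  · rintro ⟨k, a, b, hb, -, ⟨hka, hak1, hka1⟩, -, ⟨hkb, hbk1, hkb1⟩, H1, H2⟩
    have hm1 : b - 1 ∈ BNC.arc (k + 1) (a - 1) := pred_mem_arc hb hbk1
    have hm2 : b - 1 ∈ BNC.arc (k + 1) (b - 1) := right_mem_arc _ _
    have hab : a ≠ b := by
      intro h; rw [← h] at hb; exact aux_self_not_mem' hn hak1 hb
    have hab1 : a ≠ b - 1 := by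
      intro h
      have hb' : b = a + 1 := by linear_combination -h
      rw [hb'] at hb
      exact aux_succ_not_mem' hn hka.symm hak1 hb
    have hkb2 : k ≠ b - 1 := by
      intro h; exact hbk1 (by rw [h]; ring)
    obtain ⟨hr1, ha1, hd1⟩ := H1 b hb
    obtain ⟨hr2, ha2, hd2⟩ := H1 (b-1) hm1
    obtain ⟨hr3, ha3, hd3⟩ := H2 (b-1) hm2
    have hvAK : refl2 (v a) ≠ refl2 (v k) := refl2_ne (v_inj hn hv (Ne.symm hka))
    have hvBK : refl2 (v b) ≠ refl2 (v k) := refl2_ne (v_inj hn hv (Ne.symm hkb))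
    have hvCK : refl2 (v (b-1)) ≠ refl2 (v k) := refl2_ne (v_inj hn hv (Ne.symm hkb2))
    have hvAB : refl2 (v a) ≠ refl2 (v b) := refl2_ne (v_inj hn hv hab)
    have hvAC : refl2 (v a) ≠ refl2 (v (b-1)) := refl2_ne (v_inj hn hv hab1)
    simp only [BNC.rightClosed, Set.mem_setOf_eq] at hr1 hr2
    have hc1 : 0 ≤ BNC.cross (refl2 (v a) - refl2 (v k)) (refl2 (v b) - refl2 (v k)) := by
      rw [refl2_sub, refl2_sub, cross_refl2]; linarith
    have hc2 : 0 ≤ BNC.cross (refl2 (v a) - refl2 (v k)) (refl2 (v (b-1)) - refl2 (v k)) := by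
      rw [refl2_sub, refl2_sub, cross_refl2]; linarith
    have hc3 : 0 < BNC.cross (refl2 (v b) - refl2 (v k)) (refl2 (v (b-1)) - refl2 (v k)) := by
      rw [refl2_sub, refl2_sub, cross_refl2]
      have h0 := hv (b-1) k hkb2
        (by rw [show b - 1 + 1 = b by ring]; exact hkb)
      rw [show b - 1 + 1 = b by ring] at h0
      have hid : BNC.cross (v b - v k) (v (b-1) - v k)
          = - BNC.cross (v b - v (b-1)) (v k - v (b-1)) := by simp [BNC.cross]; ring
      rw [hid]; linarith
    refine core hvAK hvBK hvCK hvAB hvAC hc1 hc2 hc3 ?_ ?_ ?_ ?_ ?_ ?_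
    · rw [angle_refl2, EuclideanGeometry.angle_comm]; exact ha1
    · rw [dist_refl2, dist_refl2, dist_comm (v a) (v k), dist_comm (v a) (v b)]
      exact hd1
    · rw [angle_refl2, EuclideanGeometry.angle_comm]; exact ha2
    · rw [dist_refl2, dist_refl2, dist_comm (v a) (v k), dist_comm (v a) (v (b-1))]
      exact hd2
    · rw [angle_refl2, EuclideanGeometry.angle_comm]; exact ha3
    · rw [dist_refl2, dist_refl2, dist_comm (v b) (v k), dist_comm (v b) (v (b-1))]
      exact hd3
end
end

section
/- Let P be a finite set of an even number of points in the plane with no three points collinear, and let M be a perfect matching of P by straight line segments that minimizes the total sum of the lengths of its segments over all perfect matchings of P. Then M is non-crossing: the closed segments of distinct pairs of M are pairwise disjoint. -/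
noncomputable section

/-- The key geometric fact: if two segments `[a,b]` and `[c,d]` intersect and the relevant
triples of endpoints are not collinear, then the rematched pairs are strictly shorter. -/
lemma crossing_swap_lt {a b c d x : BNC.Pt}
    (hx1 : x ∈ segment ℝ a b) (hx2 : x ∈ segment ℝ c d)
    (h1 : ¬ Collinear ℝ ({c, a, d} : Set BNC.Pt))
    (h2 : ¬ Collinear ℝ ({c, b, d} : Set BNC.Pt))
    (h3 : ¬ Collinear ℝ ({a, c, b} : Set BNC.Pt))
    (h4 : ¬ Collinear ℝ ({a, d, b} : Set BNC.Pt))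
    (h5 : ¬ Collinear ℝ ({a, b, c} : Set BNC.Pt)) :
    dist a c + dist b d < dist a b + dist c d := by
  have w1 : Wbtw ℝ a x b := mem_segment_iff_wbtw.mp hx1
  have w2 : Wbtw ℝ c x d := mem_segment_iff_wbtw.mp hx2
  have e1 : dist a x + dist x b = dist a b := w1.dist_add_dist
  have e2 : dist c x + dist x d = dist c d := w2.dist_add_dist
  have t1 : dist a c ≤ dist a x + dist x c := dist_triangle a x c
  have t2 : dist b d ≤ dist b x + dist x d := dist_triangle b x d
  by_contra hlt
  push_neg at hlt
  have hbx : dist b x = dist x b := dist_comm b x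
  have hxc : dist x c = dist c x := dist_comm x c
  have q1 : dist a x + dist x c = dist a c := by linarith
  have q2 : dist b x + dist x d = dist b d := by linarith
  have wac : Wbtw ℝ a x c := dist_add_dist_eq_iff.mp q1
  rcases eq_or_ne x a with rfl | hxa
  · exact h1 w2.collinear
  rcases eq_or_ne x b with rfl | hxb
  · exact h2 w2.collinear
  rcases eq_or_ne x c with rfl | hxc'
  · exact h3 w1.collinear
  rcases eq_or_ne x d with rfl | hxd
  · exact h4 w1.collinear
  have c1 : Collinear ℝ ({a, x, b} : Set BNC.Pt) := w1.collinear
  have c2 : Collinear ℝ ({a, x, c} : Set BNC.Pt) := wac.collinear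
  have c3 : Collinear ℝ (insert c ({a, x, b} : Set BNC.Pt)) := by
    rw [c1.collinear_insert_iff_of_ne (p₁ := c) (p₂ := a) (p₃ := x)
      (Set.mem_insert _ _) (by simp) (fun h => hxa h.symm)]
    refine c2.subset ?_
    intro y hy
    simp only [Set.mem_insert_iff, Set.mem_singleton_iff] at hy ⊢
    tauto
  refine h5 (c3.subset ?_)
  intro y hy
  simp only [Set.mem_insert_iff, Set.mem_singleton_iff] at hy ⊢
  tauto

/-- A perfect matching of a finite planar point set (no three points collinear)
minimizing the total sum of segment lengths is non-crossing. -/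
theorem stmt19 (P : Finset BNC.Pt) (hP : Even P.card)
    (hcol : ∀ p ∈ P, ∀ q ∈ P, ∀ r ∈ P, p ≠ q → q ≠ r → p ≠ r →
      ¬ Collinear ℝ ({p, q, r} : Set BNC.Pt))
    (M : Finset (Sym2 BNC.Pt))
    (hM : (∀ e ∈ M, ¬ e.IsDiag) ∧ (∀ e ∈ M, ∀ p ∈ e, p ∈ P) ∧
      (∀ p ∈ P, ∃! e, e ∈ M ∧ p ∈ e))
    (hmin : ∀ M' : Finset (Sym2 BNC.Pt),
      ((∀ e ∈ M', ¬ e.IsDiag) ∧ (∀ e ∈ M', ∀ p ∈ e, p ∈ P) ∧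
        (∀ p ∈ P, ∃! e, e ∈ M' ∧ p ∈ e)) →
      ∑ e ∈ M, Sym2.lift ⟨fun a b => dist a b, fun a b => dist_comm a b⟩ e ≤
        ∑ e ∈ M', Sym2.lift ⟨fun a b => dist a b, fun a b => dist_comm a b⟩ e) :
    ∀ e ∈ M, ∀ e' ∈ M, e ≠ e' →
      Disjoint
        (Sym2.lift ⟨fun a b => segment ℝ a b, fun a b => segment_symm ℝ a b⟩ e)
        (Sym2.lift ⟨fun a b => segment ℝ a b, fun a b => segment_symm ℝ a b⟩ e') := by
  classical
  obtain ⟨hdiag, hmemP, huniq⟩ := hM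
  have huniq' : ∀ p : BNC.Pt, ∀ f g : Sym2 BNC.Pt, p ∈ P → f ∈ M → g ∈ M →
      p ∈ f → p ∈ g → f = g := by
    intro p f g hp hf hg h1 h2
    obtain ⟨e0, -, hu⟩ := huniq p hp
    exact (hu f ⟨hf, h1⟩).trans (hu g ⟨hg, h2⟩).symm
  intro e he e' he' hne
  revert he hne
  induction e using Sym2.ind with | _ a b => ?_
  intro he hne
  revert he' hne
  induction e' using Sym2.ind with | _ c d => ?_
  intro he' hne
  simp only [Sym2.lift_mk]
  by_contra hdisj
  rw [Set.not_disjoint_iff] at hdisj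
  obtain ⟨x, hxab, hxcd⟩ := hdisj
  -- basic membership and distinctness facts
  have haP : a ∈ P := hmemP _ he a (by simp)
  have hbP : b ∈ P := hmemP _ he b (by simp)
  have hcP : c ∈ P := hmemP _ he' c (by simp)
  have hdP : d ∈ P := hmemP _ he' d (by simp)
  have hab : a ≠ b := by
    intro h; exact hdiag _ he (by simp [Sym2.mk_isDiag_iff, h])
  have hcd : c ≠ d := by
    intro h; exact hdiag _ he' (by simp [Sym2.mk_isDiag_iff, h])
  have hsep : ∀ p : BNC.Pt, p ∈ (s(a, b) : Sym2 BNC.Pt) → p ∈ (s(c, d) : Sym2 BNC.Pt) → False := by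
    intro p h1 h2
    exact hne (huniq' p _ _ (hmemP _ he p h1) he he' h1 h2)
  have hac : a ≠ c := fun h => hsep a (by simp) (by simp [h])
  have had : a ≠ d := fun h => hsep a (by simp) (by simp [h])
  have hbc : b ≠ c := fun h => hsep b (by simp) (by simp [h])
  have hbd : b ≠ d := fun h => hsep b (by simp) (by simp [h])
  -- the strict length decrease after rematching
  have hlt : dist a c + dist b d < dist a b + dist c d :=
    crossing_swap_lt hxab hxcd
      (hcol c hcP a haP d hdP hac.symm had hcd)
      (hcol c hcP b hbP d hdP hbc.symm hbd hcd)
      (hcol a haP c hcP b hbP hac hbc.symm hab)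
      (hcol a haP d hdP b hbP had hbd.symm hab)
      (hcol a haP b hbP c hcP hab hbc hac)
  -- the rematched matching: M' = insert s(a,c) (insert s(b,d) ((M.erase s(a,b)).erase s(c,d)))
  have hE1M : (s(a, c) : Sym2 BNC.Pt) ∉ M := by
    intro h
    have h2 := huniq' a s(a, c) s(a, b) haP h he (by simp) (by simp)
    rw [Sym2.eq_iff] at h2
    rcases h2 with ⟨-, h2⟩ | ⟨h1, -⟩
    · exact hbc h2.symm
    · exact hab h1
  have hE2M : (s(b, d) : Sym2 BNC.Pt) ∉ M := by
    intro h
    have h2 := huniq' b s(b, d) s(a, b) hbP h he (by simp) (by simp)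
    rw [Sym2.eq_iff] at h2
    rcases h2 with ⟨h1, -⟩ | ⟨-, h2⟩
    · exact hab h1.symm
    · exact had h2.symm
  have hE12 : (s(a, c) : Sym2 BNC.Pt) ≠ s(b, d) := by
    intro h
    rw [Sym2.eq_iff] at h
    rcases h with ⟨h1, -⟩ | ⟨h1, -⟩
    · exact hab h1
    · exact had h1
  have hM0sub : ∀ g ∈ (M.erase s(a, b)).erase s(c, d),
      g ∈ M ∧ g ≠ s(a, b) ∧ g ≠ s(c, d) := by
    intro g hg
    rw [Finset.mem_erase, Finset.mem_erase] at hg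
    exact ⟨hg.2.2, hg.2.1, hg.1⟩
  -- no edge remaining in the doubly-erased set touches `a`, `b`, `c`, or `d`
  have hM0free : ∀ g ∈ (M.erase s(a, b)).erase s(c, d), ∀ p : BNC.Pt, p ∈ g →
      (p = a ∨ p = b ∨ p = c ∨ p = d) → False := by
    intro g hg p hpg hor
    obtain ⟨hgM, hg1, hg2⟩ := hM0sub g hg
    have hpP : p ∈ P := hmemP _ hgM p hpg
    rcases hor with h | h | h | h
    · exact hg1 (huniq' p g s(a, b) hpP hgM he hpg (by simp [h]))
    · exact hg1 (huniq' p g s(a, b) hpP hgM he hpg (by simp [h]))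
    · exact hg2 (huniq' p g s(c, d) hpP hgM he' hpg (by simp [h]))
    · exact hg2 (huniq' p g s(c, d) hpP hgM he' hpg (by simp [h]))
  have hE1nm : (s(a, c) : Sym2 BNC.Pt) ∉ insert s(b, d) ((M.erase s(a, b)).erase s(c, d)) := by
    rw [Finset.mem_insert]
    rintro (h | h)
    · exact hE12 h
    · exact hE1M (hM0sub _ h).1
  have hE2nm : (s(b, d) : Sym2 BNC.Pt) ∉ (M.erase s(a, b)).erase s(c, d) :=
    fun h => hE2M (hM0sub _ h).1
  have hE1mem : (s(a, c) : Sym2 BNC.Pt) ∈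
      insert s(a, c) (insert s(b, d) ((M.erase s(a, b)).erase s(c, d))) :=
    Finset.mem_insert_self _ _
  have hE2mem : (s(b, d) : Sym2 BNC.Pt) ∈
      insert s(a, c) (insert s(b, d) ((M.erase s(a, b)).erase s(c, d))) :=
    Finset.mem_insert_of_mem (Finset.mem_insert_self _ _)
  -- `M'` is a perfect matching of `P`
  have hM' : (∀ e ∈ insert s(a, c) (insert s(b, d) ((M.erase s(a, b)).erase s(c, d))),
        ¬ e.IsDiag) ∧
      (∀ e ∈ insert s(a, c) (insert s(b, d) ((M.erase s(a, b)).erase s(c, d))),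
        ∀ p ∈ e, p ∈ P) ∧
      (∀ p ∈ P, ∃! e,
        e ∈ insert s(a, c) (insert s(b, d) ((M.erase s(a, b)).erase s(c, d))) ∧ p ∈ e) := by
    refine ⟨?_, ?_, ?_⟩
    · intro g hg
      rw [Finset.mem_insert, Finset.mem_insert] at hg
      rcases hg with rfl | rfl | hg
      · simpa [Sym2.mk_isDiag_iff] using hac
      · simpa [Sym2.mk_isDiag_iff] using hbd
      · exact hdiag _ (hM0sub _ hg).1
    · intro g hg p hpg
      rw [Finset.mem_insert, Finset.mem_insert] at hg
      rcases hg with rfl | rfl | hg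
      · rw [Sym2.mem_iff] at hpg
        rcases hpg with h | h
        · rw [h]; exact haP
        · rw [h]; exact hcP
      · rw [Sym2.mem_iff] at hpg
        rcases hpg with h | h
        · rw [h]; exact hbP
        · rw [h]; exact hdP
      · exact hmemP _ (hM0sub _ hg).1 p hpg
    · intro p hp
      obtain ⟨f, ⟨hfM, hpf⟩, hfu⟩ := huniq p hp
      have uniq_new : ∀ gE : Sym2 BNC.Pt,
          gE ∈ insert s(a, c) (insert s(b, d) ((M.erase s(a, b)).erase s(c, d))) → p ∈ gE →
          ((p = a ∨ p = c) → gE = s(a, c)) ∧ ((p = b ∨ p = d) → gE = s(b, d)) := by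
        intro gE hgE hpg
        rw [Finset.mem_insert, Finset.mem_insert] at hgE
        constructor
        · intro hor
          rcases hgE with h | h | h
          · exact h
          · exfalso
            rw [h, Sym2.mem_iff] at hpg
            rcases hor with h1 | h1 <;> rcases hpg with h2 | h2 <;>
              first
                | exact hab (h1 ▸ h2 ▸ rfl : a = b)
                | exact had (h1 ▸ h2 ▸ rfl : a = d)
                | exact hbc ((h1 ▸ h2 ▸ rfl : c = b)).symm
                | exact hcd (h1 ▸ h2 ▸ rfl : c = d)
          · exact (hM0free _ h p hpg (by tauto)).elim
        · intro hor
          rcases hgE with h | h | h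
          · exfalso
            rw [h, Sym2.mem_iff] at hpg
            rcases hor with h1 | h1 <;> rcases hpg with h2 | h2 <;>
              first
                | exact hab (h2 ▸ h1 ▸ rfl : a = b)
                | exact hbc (h2 ▸ h1 ▸ rfl : b = c)
                | exact had (h2 ▸ h1 ▸ rfl : a = d)
                | exact hcd ((h2 ▸ h1 ▸ rfl : d = c)).symm
          · exact h
          · exact (hM0free _ h p hpg (by tauto)).elim
      by_cases hp1 : p = a ∨ p = c
      · refine ⟨s(a, c), ⟨hE1mem, ?_⟩, fun g hg => (uniq_new g hg.1 hg.2).1 hp1⟩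
        rcases hp1 with h | h
        · rw [h]; simp
        · rw [h]; simp
      by_cases hp2 : p = b ∨ p = d
      · refine ⟨s(b, d), ⟨hE2mem, ?_⟩, fun g hg => (uniq_new g hg.1 hg.2).2 hp2⟩
        rcases hp2 with h | h
        · rw [h]; simp
        · rw [h]; simp
      push_neg at hp1 hp2
      have hfab : f ≠ s(a, b) := by
        intro h
        rw [h, Sym2.mem_iff] at hpf
        rcases hpf with h1 | h1
        · exact hp1.1 h1
        · exact hp2.1 h1
      have hfcd : f ≠ s(c, d) := by
        intro h
        rw [h, Sym2.mem_iff] at hpf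
        rcases hpf with h1 | h1
        · exact hp1.2 h1
        · exact hp2.2 h1
      have hfM0 : f ∈ (M.erase s(a, b)).erase s(c, d) := by
        rw [Finset.mem_erase, Finset.mem_erase]
        exact ⟨hfcd, hfab, hfM⟩
      refine ⟨f, ⟨Finset.mem_insert_of_mem (Finset.mem_insert_of_mem hfM0), hpf⟩, ?_⟩
      intro g hg
      obtain ⟨hgm, hpg⟩ := hg
      rw [Finset.mem_insert, Finset.mem_insert] at hgm
      rcases hgm with rfl | rfl | hg0
      · rw [Sym2.mem_iff] at hpg
        rcases hpg with h1 | h1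
        · exact absurd h1 hp1.1
        · exact absurd h1 hp1.2
      · rw [Sym2.mem_iff] at hpg
        rcases hpg with h1 | h1
        · exact absurd h1 hp2.1
        · exact absurd h1 hp2.2
      · exact hfu g ⟨(hM0sub _ hg0).1, hpg⟩
  -- compare total lengths
  have hsum := hmin _ hM'
  have hcdM : (s(c, d) : Sym2 BNC.Pt) ∈ M.erase s(a, b) :=
    Finset.mem_erase.mpr ⟨fun h => hne h.symm, he'⟩
  have hsumM : ∑ e ∈ M,
      Sym2.lift ⟨fun a b => dist a b, fun a b => dist_comm a b⟩ e
      = dist a b + dist c d + ∑ e ∈ (M.erase s(a, b)).erase s(c, d),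
          Sym2.lift ⟨fun a b => dist a b, fun a b => dist_comm a b⟩ e := by
    rw [← Finset.add_sum_erase _ _ he, ← Finset.add_sum_erase _ _ hcdM]
    simp only [Sym2.lift_mk]
    ring
  have hsumM' : ∑ e ∈ insert s(a, c) (insert s(b, d) ((M.erase s(a, b)).erase s(c, d))),
      Sym2.lift ⟨fun a b => dist a b, fun a b => dist_comm a b⟩ e
      = dist a c + dist b d + ∑ e ∈ (M.erase s(a, b)).erase s(c, d),
          Sym2.lift ⟨fun a b => dist a b, fun a b => dist_comm a b⟩ e := by
    rw [Finset.sum_insert hE1nm, Finset.sum_insert hE2nm]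
    simp only [Sym2.lift_mk]
    ring
  rw [hsumM, hsumM'] at hsum
  linarith
end
end
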